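/- For the cyclic shift channel Φ of the previous context, with Ũ_i := U_i⋯U_1 (Ũ_0 := 1) and Ũ := U_0 Ũ_{d−1}, the fixed points of Φ are exactly the families A_i = Ũ_i A_0 Ũ_i* where A_0 commutes with Ũ. In particular the map A_0 ↦ (Ũ_i A_0 Ũ_i*)_i is a bijection from the commutant of Ũ onto the fixed point set of Φ. -/

import Mathlib

open Matrix

/-- `Ut U i = U i * U (i-1) * ⋯ * U 1`, with `Ut U 0 = 1`. -/
noncomputable def Ut {n d : ℕ} [NeZero d]
    (U : ZMod d → Matrix (Fin n) (Fin n) ℂ) : ℕ → Matrix (Fin n) (Fin n) ℂ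
  | 0 => 1
  | (i + 1) => U ((i + 1 : ℕ) : ZMod d) * Ut U i

lemma Ut_unitary {n d : ℕ} [NeZero d]
    (U : ZMod d → Matrix (Fin n) (Fin n) ℂ)
    (hU : ∀ i, (U i)ᴴ * U i = 1 ∧ U i * (U i)ᴴ = 1) (k : ℕ) :
    (Ut U k)ᴴ * Ut U k = 1 ∧ Ut U k * (Ut U k)ᴴ = 1 := by
  induction k with
  | zero => simp [Ut]
  | succ k ih =>
    constructor
    · show (U _ * Ut U k)ᴴ * (U _ * Ut U k) = 1
      rw [conjTranspose_mul, mul_assoc, ← mul_assoc (U _)ᴴ, (hU _).1, one_mul, ih.1]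
    · show (U _ * Ut U k) * (U _ * Ut U k)ᴴ = 1
      rw [conjTranspose_mul, mul_assoc, ← mul_assoc (Ut U k), ih.2, one_mul, (hU _).2]

theorem stmt_15 {n d : ℕ} [NeZero d]
    (U : ZMod d → Matrix (Fin n) (Fin n) ℂ)
    (hU : ∀ i, (U i)ᴴ * U i = 1 ∧ U i * (U i)ᴴ = 1)
    (A : ZMod d → Matrix (Fin n) (Fin n) ℂ) :
    (fun j => (U (j + 1))ᴴ * A (j + 1) * U (j + 1)) = A ↔
      ∃ A₀ : Matrix (Fin n) (Fin n) ℂ,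
        A₀ * (U 0 * Ut U (d - 1)) = (U 0 * Ut U (d - 1)) * A₀ ∧
        ∀ i : ZMod d, A i = Ut U i.val * A₀ * (Ut U i.val)ᴴ := by
  have hd : 0 < d := Nat.pos_of_ne_zero (NeZero.ne d)
  have h1 : ∀ i, (U i)ᴴ * U i = 1 := fun i => (hU i).1
  have h2 : ∀ i, U i * (U i)ᴴ = 1 := fun i => (hU i).2
  have hc1 : ∀ (i : ZMod d) (X : Matrix (Fin n) (Fin n) ℂ), (U i)ᴴ * (U i * X) = X := by
    intro i X; rw [← mul_assoc, h1, one_mul]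
  have hc2 : ∀ (i : ZMod d) (X : Matrix (Fin n) (Fin n) ℂ), U i * ((U i)ᴴ * X) = X := by
    intro i X; rw [← mul_assoc, h2, one_mul]
  have hdcast : ((d - 1 : ℕ) : ZMod d) + 1 = 0 := by
    rw [show ((d - 1 : ℕ) : ZMod d) + 1 = ((d - 1 + 1 : ℕ) : ZMod d) by push_cast; ring,
      Nat.sub_add_cancel hd, ZMod.natCast_self]
  constructor
  · intro h
    have hfix : ∀ j : ZMod d, A (j + 1) = U (j + 1) * A j * (U (j + 1))ᴴ := by
      intro j
      have hj := congrFun h j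
      rw [← hj]
      rw [show U (j+1) * ((U (j+1))ᴴ * A (j+1) * U (j+1)) * (U (j+1))ᴴ
          = (U (j+1) * (U (j+1))ᴴ) * A (j+1) * (U (j+1) * (U (j+1))ᴴ) by
            simp only [mul_assoc], h2, one_mul, mul_one]
    have key : ∀ k : ℕ, k < d → A ((k : ℕ) : ZMod d) = Ut U k * A 0 * (Ut U k)ᴴ := by
      intro k
      induction k with
      | zero => intro _; simp [Ut]
      | succ k ih =>
        intro hk
        have hk' : k < d := Nat.lt_of_succ_lt hk
        have hcast : ((k + 1 : ℕ) : ZMod d) = ((k : ℕ) : ZMod d) + 1 := by push_cast; ring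
        rw [hcast, hfix ((k : ℕ) : ZMod d), ih hk']
        show _ = Ut U (k+1) * A 0 * (Ut U (k+1))ᴴ
        simp only [Ut, hcast, conjTranspose_mul, mul_assoc]
    refine ⟨A 0, ?_, ?_⟩
    · have hd1 : d - 1 < d := Nat.sub_lt hd one_pos
      have h0 : A 0 = U 0 * (Ut U (d-1) * A 0 * (Ut U (d-1))ᴴ) * (U 0)ᴴ := by
        have := hfix ((d - 1 : ℕ) : ZMod d)
        rw [hdcast] at this
        rw [key (d-1) hd1] at this
        exact this
      -- A 0 * (U 0 * Ut) = (U 0 * Ut) * A 0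
      have hUt := Ut_unitary U hU (d - 1)
      calc A 0 * (U 0 * Ut U (d-1))
          = (U 0 * (Ut U (d-1) * A 0 * (Ut U (d-1))ᴴ) * (U 0)ᴴ) * (U 0 * Ut U (d-1)) := by
            rw [← h0]
        _ = U 0 * Ut U (d-1) * A 0 * ((Ut U (d-1))ᴴ * ((U 0)ᴴ * (U 0 * Ut U (d-1)))) := by
            simp only [mul_assoc]
        _ = (U 0 * Ut U (d-1)) * A 0 := by
            rw [hc1, hUt.1, mul_one]
    · intro i
      have := key i.val i.val_lt
      rwa [ZMod.natCast_val, ZMod.cast_id] at this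
  · rintro ⟨A₀, hcomm, hA⟩
    funext j
    show (U (j + 1))ᴴ * A (j + 1) * U (j + 1) = A j
    rcases Nat.lt_or_ge (j.val + 1) d with hlt | hge
    · have hv : (j + 1).val = j.val + 1 := by
        have : j + 1 = ((j.val + 1 : ℕ) : ZMod d) := by
          push_cast [ZMod.natCast_val, ZMod.cast_id]
          rfl
        rw [this, ZMod.val_cast_of_lt hlt]
      have hUj : U ((j.val + 1 : ℕ) : ZMod d) = U (j + 1) := by
        congr 1
        push_cast [ZMod.natCast_val, ZMod.cast_id]
        rfl
      rw [hA (j + 1), hA j, hv]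
      show (U (j+1))ᴴ * (U ((j.val + 1 : ℕ) : ZMod d) * Ut U j.val * A₀ *
        (U ((j.val + 1 : ℕ) : ZMod d) * Ut U j.val)ᴴ) * U (j+1) = _
      rw [hUj]
      simp only [conjTranspose_mul, mul_assoc, hc1]
      rw [h1, mul_one]
    · have hjv := j.val_lt
      have hle : j.val + 1 = d := by omega
      have hjval : j.val = d - 1 := by omega
      have hj1 : j + 1 = 0 := by
        have : j = ((d - 1 : ℕ) : ZMod d) := by
          rw [← hjval, ZMod.natCast_val, ZMod.cast_id]
        rw [this, hdcast]
      have hUt := Ut_unitary U hU (d - 1)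
      rw [hA (j + 1), hA j, hj1, hjval]
      show (U 0)ᴴ * (Ut U (0 : ZMod d).val * A₀ * (Ut U (0 : ZMod d).val)ᴴ) * U 0
          = Ut U (d-1) * A₀ * (Ut U (d-1))ᴴ
      rw [ZMod.val_zero]
      show (U 0)ᴴ * ((1 : Matrix (Fin n) (Fin n) ℂ) * A₀ * (1 : Matrix (Fin n) (Fin n) ℂ)ᴴ) * U 0 = _
      rw [conjTranspose_one, one_mul, mul_one]
      -- from hcomm : A₀ * (U 0 * Ut) = (U 0 * Ut) * A₀
      calc (U 0)ᴴ * A₀ * U 0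
          = (U 0)ᴴ * (A₀ * (U 0 * Ut U (d-1))) * (Ut U (d-1))ᴴ := by
            simp only [mul_assoc]
            rw [hUt.2, mul_one]
        _ = (U 0)ᴴ * ((U 0 * Ut U (d-1)) * A₀) * (Ut U (d-1))ᴴ := by rw [hcomm]
        _ = Ut U (d-1) * A₀ * (Ut U (d-1))ᴴ := by
            rw [show (U 0)ᴴ * ((U 0 * Ut U (d-1)) * A₀) = Ut U (d-1) * A₀ by
              rw [← mul_assoc, ← mul_assoc, h1, one_mul]]
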